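/- In the zonotope setting, let i, t ∈ I with i ≠ t. If σ_i = σ_t, then Z_A^i ∩ Z_A^t = ∅ and Z_B^i ∩ Z_B^t = ∅. -/
import Mathlib


open scoped Classical

noncomputable section

/-- The family of `k + 1` vectors `w¹, …, w^k, w^j` indexed by `I = {1,…,k} ∪ {j}`,
realized as `Option (Fin k)` with `none` playing the role of the extra index `j`. -/
def vecs {k : ℕ} (w : Fin k → (Fin k → ℝ)) (wj : Fin k → ℝ) :
    Option (Fin k) → (Fin k → ℝ) :=
  fun o => o.elim wj w

/-- The signs `σ_i` for `i ∈ I`: for `i ∈ {1,…,k}`,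
`σ_i = sign(det W_{[i→j]} / det [w¹ ⋯ w^k])` where `W_{[i→j]}` is `[w¹ ⋯ w^k]` with
its `i`-th column replaced by `w^j`; and `σ_j = −1`. -/
def sigOf {k : ℕ} (w : Fin k → (Fin k → ℝ)) (wj : Fin k → ℝ) : Option (Fin k) → ℝ :=
  fun o => o.elim (-1) fun i =>
    Real.sign ((Matrix.of fun a l => if l = i then wj a else w l a).det /
      (Matrix.of fun a l => w l a).det)

/-- The open parallelotope `Z_A^i = {∑_{r ∈ I ∖ {i}} λ_r w^r : λ_r ∈ (0,1)}`
if the `k` vectors `{w^r}_{r ∈ I ∖ {i}}` are linearly independent, and `∅`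
otherwise. -/
def ZA {k : ℕ} (w : Fin k → (Fin k → ℝ)) (wj : Fin k → ℝ) (i : Option (Fin k)) :
    Set (Fin k → ℝ) :=
  if LinearIndependent ℝ (fun r : {r : Option (Fin k) // r ≠ i} => vecs w wj r.1) then
    {x | ∃ lam : Option (Fin k) → ℝ,
      (∀ r : Option (Fin k), r ≠ i → lam r ∈ Set.Ioo (0 : ℝ) 1) ∧
      x = ∑ r ∈ Finset.univ.erase i, lam r • vecs w wj r}
  else ∅

/-- The translated open parallelotope `Z_B^i = w^i + Z_A^i`. -/
def ZB {k : ℕ} (w : Fin k → (Fin k → ℝ)) (wj : Fin k → ℝ) (i : Option (Fin k)) :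
    Set (Fin k → ℝ) :=
  (fun y => vecs w wj i + y) '' ZA w wj i

end

noncomputable section ZAux

namespace ZAuxNS

variable {k : ℕ} (w : Fin k → (Fin k → ℝ)) (wj : Fin k → ℝ)

def Mw : Matrix (Fin k) (Fin k) ℝ := Matrix.of fun a l => w l a

def cc : Fin k → ℝ := fun m =>
  (Matrix.of fun a l => if l = m then wj a else w l a).det / (Mw w).det

lemma mulVec_basis (b : Fin k → ℝ) : (Mw w).mulVec b = ∑ m, b m • w m := by
  funext a
  simp [Mw, Matrix.mulVec, dotProduct, Finset.sum_apply, mul_comm]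

lemma mulVec_cc (hdet : (Mw w).det ≠ 0) : (Mw w).mulVec (cc w wj) = wj := by
  have h1 : cc w wj = ((Mw w).det)⁻¹ • (Mw w).cramer wj := by
    funext m
    have hM : (Mw w).updateCol m wj = Matrix.of fun a l => if l = m then wj a else w l a := by
      ext a l
      simp [Matrix.updateCol_apply, Mw]
    simp [cc, Matrix.cramer_apply, hM, div_eq_inv_mul, mul_comm]
  rw [h1, Matrix.mulVec_smul, Matrix.mulVec_cramer, smul_smul, inv_mul_cancel₀ hdet, one_smul]

def coefA (i : Option (Fin k)) (lam : Option (Fin k) → ℝ) : Fin k → ℝ :=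
  fun m => (if (none : Option (Fin k)) = i then 0 else lam none) * cc w wj m +
    (if some m = i then 0 else lam (some m))

lemma repr_sum (hdet : (Mw w).det ≠ 0) (i : Option (Fin k)) (lam : Option (Fin k) → ℝ) :
    ∑ r ∈ Finset.univ.erase i, lam r • vecs w wj r = (Mw w).mulVec (coefA w wj i lam) := by
  have h1 : ∑ r ∈ Finset.univ.erase i, lam r • vecs w wj r
      = ∑ r : Option (Fin k), (if r = i then (0:ℝ) else lam r) • vecs w wj r :=
    calc ∑ r ∈ Finset.univ.erase i, lam r • vecs w wj r
        = ∑ r ∈ Finset.univ.erase i, (if r = i then (0:ℝ) else lam r) • vecs w wj r :=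
          Finset.sum_congr rfl fun r hr => by rw [if_neg (Finset.ne_of_mem_erase hr)]
      _ = ∑ r : Option (Fin k), (if r = i then (0:ℝ) else lam r) • vecs w wj r :=
          Finset.sum_erase _ (by simp)
  rw [h1, univ_option, Finset.sum_insertNone]
  have h2 : coefA w wj i lam =
      (if (none : Option (Fin k)) = i then (0:ℝ) else lam none) • cc w wj +
      fun m => (if some m = i then (0:ℝ) else lam (some m)) := by
    funext m
    simp only [coefA, Pi.add_apply, Pi.smul_apply, smul_eq_mul]
  rw [h2, Matrix.mulVec_add, Matrix.mulVec_smul, mulVec_cc w wj hdet, mulVec_basis]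
  rfl

def coefE (i : Option (Fin k)) : Fin k → ℝ := i.elim (cc w wj) fun i0 => Pi.single i0 1

lemma vecs_mulVec (hdet : (Mw w).det ≠ 0) (i : Option (Fin k)) :
    vecs w wj i = (Mw w).mulVec (coefE w wj i) := by
  cases i with
  | none => exact (mulVec_cc w wj hdet).symm
  | some i0 =>
    funext a
    simp [coefE, vecs, Matrix.mulVec_single, Mw]

lemma mem_ZA {x : Fin k → ℝ} {i : Option (Fin k)} (hx : x ∈ ZA w wj i) :
    ∃ lam : Option (Fin k) → ℝ,
      (∀ r : Option (Fin k), r ≠ i → lam r ∈ Set.Ioo (0 : ℝ) 1) ∧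
      x = ∑ r ∈ Finset.univ.erase i, lam r • vecs w wj r := by
  unfold ZA at hx
  split_ifs at hx with h
  · exact hx
  · exact absurd hx (Set.notMem_empty x)

lemma contra_key {a b d u v : ℝ} (hab : 0 ≤ a * b) (h1 : d * a = u) (hu : 0 < u)
    (h2 : d * b = v) (hv : v < 0) : False := by
  have h3 : u * v = (a * b) * (d * d) := by rw [← h1, ← h2]; ring
  nlinarith [mul_nonneg hab (mul_self_nonneg d)]

lemma sign_eq_nonneg {a b : ℝ} (h : Real.sign a = Real.sign b) : 0 ≤ a * b := by
  rcases lt_trichotomy a 0 with ha | ha | ha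
  · rw [Real.sign_of_neg ha] at h
    have hb : b < 0 := by
      rcases lt_trichotomy b 0 with hb | hb | hb
      · exact hb
      · rw [hb, Real.sign_zero] at h; norm_num at h
      · rw [Real.sign_of_pos hb] at h; norm_num at h
    exact (mul_pos_of_neg_of_neg ha hb).le
  · simp [ha]
  · rw [Real.sign_of_pos ha] at h
    have hb : 0 < b := by
      rcases lt_trichotomy b 0 with hb | hb | hb
      · rw [Real.sign_of_neg hb] at h; norm_num at h
      · rw [hb, Real.sign_zero] at h; norm_num at h
      · exact hb
    exact (mul_pos ha hb).le

lemma neg_of_sign_eq_neg_one {a : ℝ} (h : Real.sign a = -1) : a < 0 := by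
  rcases lt_trichotomy a 0 with ha | ha | ha
  · exact ha
  · rw [ha, Real.sign_zero] at h; norm_num at h
  · rw [Real.sign_of_pos ha] at h; norm_num at h

end ZAuxNS

end ZAux


/-- If `i ≠ t` in `I` and `σ_i = σ_t`, then `Z_A^i ∩ Z_A^t = ∅` and
`Z_B^i ∩ Z_B^t = ∅`. -/
theorem ZA_ZB_disjoint_of_equal_signs (k : ℕ) (hk : 1 ≤ k)
    (w : Fin k → (Fin k → ℝ)) (wj : Fin k → ℝ)
    (hdet : (Matrix.of fun a l => w l a).det ≠ 0)
    (i t : Option (Fin k)) (hit : i ≠ t)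
    (hsig : sigOf w wj i = sigOf w wj t) :
    ZA w wj i ∩ ZA w wj t = ∅ ∧ ZB w wj i ∩ ZB w wj t = ∅ := by
  classical
  have hdet' : (ZAuxNS.Mw w).det ≠ 0 := hdet
  have hinj : Function.Injective (ZAuxNS.Mw w).mulVec :=
    Matrix.mulVec_injective_iff_isUnit.mpr
      ((Matrix.isUnit_iff_isUnit_det _).mpr (isUnit_iff_ne_zero.mpr hdet'))
  constructor
  · rw [Set.eq_empty_iff_forall_notMem]
    rintro x ⟨hxi, hxt⟩
    obtain ⟨lam, hlam, hxl⟩ := ZAuxNS.mem_ZA w wj hxi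
    obtain ⟨mu, hmu, hxm⟩ := ZAuxNS.mem_ZA w wj hxt
    have heq : ZAuxNS.coefA w wj i lam = ZAuxNS.coefA w wj t mu := by
      apply hinj
      rw [← ZAuxNS.repr_sum w wj hdet', ← ZAuxNS.repr_sum w wj hdet', ← hxl, ← hxm]
    cases i with
    | none =>
      cases t with
      | none => exact hit rfl
      | some t0 =>
        have hct : ZAuxNS.cc w wj t0 < 0 := ZAuxNS.neg_of_sign_eq_neg_one hsig.symm
        have e1 := congrFun heq t0
        simp only [ZAuxNS.coefA, if_pos rfl, reduceCtorEq, if_neg, zero_mul, zero_add,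
          add_zero, if_true, if_false] at e1
        have h1 := (hlam (some t0) (by simp)).1
        have h2 := (hmu none (by simp)).1
        nlinarith [mul_pos h2 (neg_pos.mpr hct)]
    | some i0 =>
      cases t with
      | none =>
        have hci : ZAuxNS.cc w wj i0 < 0 := ZAuxNS.neg_of_sign_eq_neg_one hsig
        have e1 := congrFun heq i0
        simp only [ZAuxNS.coefA, if_pos rfl, reduceCtorEq, if_neg, zero_mul, zero_add,
          add_zero, if_true, if_false] at e1
        have h1 := (hlam none (by simp)).1
        have h2 := (hmu (some i0) (by simp)).1
        nlinarith [mul_pos h1 (neg_pos.mpr hci)]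
      | some t0 =>
        have hii : i0 ≠ t0 := by simpa using hit
        have hs : Real.sign (ZAuxNS.cc w wj i0) = Real.sign (ZAuxNS.cc w wj t0) := hsig
        have hab := ZAuxNS.sign_eq_nonneg hs
        have e1 := congrFun heq i0
        have e2 := congrFun heq t0
        simp only [ZAuxNS.coefA, Option.some.injEq, if_neg hii, if_neg hii.symm,
          reduceCtorEq, if_neg, if_pos rfl, zero_mul, zero_add, add_zero,
          if_true, if_false] at e1 e2
        have hu := (hmu (some i0) (by simp [hii])).1
        have hv := (hlam (some t0) (by simp [hii.symm])).1
        exact ZAuxNS.contra_key hab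
          (d := lam none - mu none) (u := mu (some i0)) (v := -(lam (some t0)))
          (by linear_combination e1) hu
          (by linear_combination e2) (by linarith)
  · rw [Set.eq_empty_iff_forall_notMem]
    rintro x ⟨⟨y1, hy1, hx1⟩, ⟨y2, hy2, hx2⟩⟩
    obtain ⟨lam, hlam, hxl⟩ := ZAuxNS.mem_ZA w wj hy1
    obtain ⟨mu, hmu, hxm⟩ := ZAuxNS.mem_ZA w wj hy2
    have heq : ZAuxNS.coefE w wj i + ZAuxNS.coefA w wj i lam
        = ZAuxNS.coefE w wj t + ZAuxNS.coefA w wj t mu := by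
      apply hinj
      rw [Matrix.mulVec_add, Matrix.mulVec_add,
        ← ZAuxNS.repr_sum w wj hdet', ← ZAuxNS.repr_sum w wj hdet',
        ← ZAuxNS.vecs_mulVec w wj hdet', ← ZAuxNS.vecs_mulVec w wj hdet',
        ← hxl, ← hxm]
      exact hx1.trans hx2.symm
    cases i with
    | none =>
      cases t with
      | none => exact hit rfl
      | some t0 =>
        have hct : ZAuxNS.cc w wj t0 < 0 := ZAuxNS.neg_of_sign_eq_neg_one hsig.symm
        have e1 := congrFun heq t0
        simp only [ZAuxNS.coefA, ZAuxNS.coefE, Option.elim, Pi.add_apply,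
          Pi.single_apply, if_pos rfl, reduceCtorEq, if_neg, zero_mul, zero_add,
          add_zero, if_true, if_false] at e1
        have h1 := hlam (some t0) (by simp)
        have h2 := hmu none (by simp)
        have hp : 0 < (1 - mu none) * (0 - ZAuxNS.cc w wj t0) :=
          mul_pos (by linarith [h2.2]) (by linarith)
        nlinarith [hp, h1.1, h1.2]
    | some i0 =>
      cases t with
      | none =>
        have hci : ZAuxNS.cc w wj i0 < 0 := ZAuxNS.neg_of_sign_eq_neg_one hsig
        have e1 := congrFun heq i0
        simp only [ZAuxNS.coefA, ZAuxNS.coefE, Option.elim, Pi.add_apply,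
          Pi.single_apply, if_pos rfl, reduceCtorEq, if_neg, zero_mul, zero_add,
          add_zero, if_true, if_false] at e1
        have h1 := hlam none (by simp)
        have h2 := hmu (some i0) (by simp)
        have hp : 0 < (1 - lam none) * (0 - ZAuxNS.cc w wj i0) :=
          mul_pos (by linarith [h1.2]) (by linarith)
        nlinarith [hp, h2.1, h2.2]
      | some t0 =>
        have hii : i0 ≠ t0 := by simpa using hit
        have hs : Real.sign (ZAuxNS.cc w wj i0) = Real.sign (ZAuxNS.cc w wj t0) := hsig
        have hab := ZAuxNS.sign_eq_nonneg hs
        have e1 := congrFun heq i0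
        have e2 := congrFun heq t0
        simp only [ZAuxNS.coefA, ZAuxNS.coefE, Option.elim, Pi.add_apply,
          Pi.single_apply, Option.some.injEq, if_neg hii, if_neg hii.symm,
          reduceCtorEq, if_neg, if_pos rfl, zero_mul, zero_add, add_zero,
          if_true, if_false] at e1 e2
        have hu := hmu (some i0) (by simp [hii])
        have hv := hlam (some t0) (by simp [hii.symm])
        exact ZAuxNS.contra_key (mul_comm (ZAuxNS.cc w wj i0) (ZAuxNS.cc w wj t0) ▸ hab)
          (d := lam none - mu none)
          (u := 1 - lam (some t0)) (by linear_combination e2) (by linarith [hv.2])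
          (v := mu (some i0) - 1) (by linear_combination e1) (by linarith [hu.2])
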